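/- If the three-dimensional Volterra lattice y₁' = y₁(x₁ - α), x₁' = x₁(y₂ - y₁), y₂' = y₂(α - x₁) satisfies the constraint y₁(t)·y₂(t) = ℓ for a constant ℓ > 0 and y₁ > 0, then (x₁, y₁) satisfies the reduced planar system y₁' = y₁(x₁ - α), x₁' = x₁(ℓ/y₁ - y₁), and the quantity G(t) = y₁(t) + x₁(t) + ℓ/y₁(t) - α·log(x₁(t)) is conserved (assuming x₁ > 0). -/

import Mathlib

theorem volterra3_reduction_to_planar
    (α ℓ : ℝ) (hℓ : 0 < ℓ) (y₁ x₁ y₂ : ℝ → ℝ)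
    (hy₁ : ∀ t, HasDerivAt y₁ (y₁ t * (x₁ t - α)) t)
    (hx₁ : ∀ t, HasDerivAt x₁ (x₁ t * (y₂ t - y₁ t)) t)
    (hy₂ : ∀ t, HasDerivAt y₂ (y₂ t * (α - x₁ t)) t)
    (hy₁pos : ∀ t, 0 < y₁ t) (hx₁pos : ∀ t, 0 < x₁ t)
    (hconstr : ∀ t, y₁ t * y₂ t = ℓ)
    (G : ℝ → ℝ)
    (hG : ∀ t, G t = y₁ t + x₁ t + ℓ / y₁ t - α * Real.log (x₁ t)) :
    (∀ t, HasDerivAt y₁ (y₁ t * (x₁ t - α)) t)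
      ∧ (∀ t, HasDerivAt x₁ (x₁ t * (ℓ / y₁ t - y₁ t)) t)
      ∧ (∀ s t : ℝ, G s = G t) := by
  have hy₂eq : ∀ t, y₂ t = ℓ / y₁ t := by
    intro t
    field_simp [(hy₁pos t).ne']
    linarith [hconstr t]
  refine ⟨hy₁, fun t => (hy₂eq t ▸ hx₁ t), ?_⟩
  have hGderiv : ∀ t, HasDerivAt G 0 t := by
    intro t
    have h1 := hy₁ t
    have h2 := hx₁ t
    have hy1ne := (hy₁pos t).ne'
    have hx1ne := (hx₁pos t).ne'
    have h3 : HasDerivAt (fun t => ℓ / y₁ t)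
        (-(ℓ * (y₁ t * (x₁ t - α))) / (y₁ t)^2) t := by
      refine ((hasDerivAt_const t ℓ).div h1 hy1ne).congr_deriv ?_
      ring
    have h4 : HasDerivAt (fun t => α * Real.log (x₁ t))
        (α * ((x₁ t)⁻¹ * (x₁ t * (y₂ t - y₁ t)))) t := by
      simpa [Function.comp] using ((Real.hasDerivAt_log hx1ne).comp t h2).const_mul α
    have := ((h1.add h2).add h3).sub h4
    have hfun : (fun t => y₁ t + x₁ t + ℓ / y₁ t - α * Real.log (x₁ t)) = G := by
      funext s; rw [hG s]
    rw [show ((y₁ + x₁ + fun t => ℓ / y₁ t) - fun t => α * Real.log (x₁ t)) = G from hfun] at this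
    refine this.congr_deriv ?_
    rw [hy₂eq t]
    field_simp
    ring
  intro s t
  have : ∀ u v : ℝ, u ≤ v → G u = G v := by
    intro u v huv
    have h := is_const_of_deriv_eq_zero (f := G)
      (fun x => (hGderiv x).differentiableAt) (fun x => (hGderiv x).deriv) u v
    exact h
  rcases le_total s t with h | h
  · exact this s t h
  · exact (this t s h).symm
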